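/- Let d ≥ 1, N ≫ 1, s < (d−3)/2, and f_N(x) = N^{-s - d/2} Σ_{|k| ∼ N} e^{i k·x}, g_N(x) = N^{-(s−1/2) − d/2} Σ_{|k| ∼ N} cos(k·x) on 𝕋^d. Then ‖f_N‖_{H^s(𝕋^d)} ∼ 1, ‖g_N‖_{H^{s−1/2}(𝕋^d)} ∼ 1, and for 0 < t ≤ 1/(100N²), ‖∫₀^t e^{i(t−t')Δ}((e^{it'Δ} f_N)(cos(t'|∇|) g_N)) dt'‖_{H^s(𝕋^d)} ≥ c t N^{−s + (d+1)/2}. In particular, taking t = 1/(100N²), the second Picard iterate has H^s-norm ≳ N^{−s + (d−3)/2}, which tends to infinity as N → ∞ when s < (d−3)/2. -/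

import Mathlib

set_option maxHeartbeats 4000000

open scoped ComplexConjugate


open Real in
lemma aux_rpow {σ A x c : ℝ} (hc : 1 ≤ c) (hA : 0 < A) (h1 : A ≤ x) (h2 : x ≤ c * A) :
    c ^ (-|σ|) * A ^ σ ≤ x ^ σ ∧ x ^ σ ≤ c ^ |σ| * A ^ σ := by
  have hx : 0 < x := lt_of_lt_of_le hA h1
  have hq1 : 1 ≤ x / A := (one_le_div hA).2 h1
  have hqc : x / A ≤ c := (div_le_iff₀ hA).2 h2
  have hkey : x ^ σ = (x / A) ^ σ * A ^ σ := by
    rw [← Real.mul_rpow (by positivity) hA.le, div_mul_cancel₀ _ hA.ne']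
  have hApos : (0:ℝ) < A ^ σ := Real.rpow_pos_of_pos hA σ
  rcases le_or_gt 0 σ with hσ | hσ
  · have habs : |σ| = σ := abs_of_nonneg hσ
    constructor
    · rw [hkey, habs]
      have h5 : c ^ (-σ) ≤ 1 := Real.rpow_le_one_of_one_le_of_nonpos hc (by linarith)
      have h6 : (1:ℝ) ≤ (x / A) ^ σ := Real.one_le_rpow hq1 hσ
      nlinarith
    · rw [hkey, habs]
      have h6 : (x / A) ^ σ ≤ c ^ σ := Real.rpow_le_rpow (by positivity) hqc hσ
      nlinarith
  · have habs : |σ| = -σ := abs_of_neg hσ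
    constructor
    · rw [hkey, habs, neg_neg]
      have h6 : c ^ σ ≤ (x / A) ^ σ := Real.rpow_le_rpow_of_nonpos (by positivity) hqc hσ.le
      nlinarith
    · rw [hkey, habs]
      have h6 : (x / A) ^ σ ≤ 1 := Real.rpow_le_one_of_one_le_of_nonpos hq1 hσ.le
      have h7 : (1:ℝ) ≤ c ^ (-σ) := Real.one_le_rpow hc (by linarith)
      nlinarith

lemma aux_re_term (x y u v : ℝ) :
    (Complex.exp (-Complex.I * (x:ℂ)) * (Complex.exp (-Complex.I * (y:ℂ)) * (u:ℂ) * (v:ℂ))).re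
      = Real.cos (x + y) * (u * v) := by
  have hx : -Complex.I * (x:ℂ) = ((-x : ℝ) : ℂ) * Complex.I := by push_cast; ring
  have hy : -Complex.I * (y:ℂ) = ((-y : ℝ) : ℂ) * Complex.I := by push_cast; ring
  rw [hx, hy]
  have : Complex.exp (((-x : ℝ) : ℂ) * Complex.I) * (Complex.exp (((-y : ℝ) : ℂ) * Complex.I) * (u:ℂ) * (v:ℂ))
      = Complex.exp (((-(x+y) : ℝ) : ℂ) * Complex.I) * ((u:ℂ) * (v:ℂ)) := by
    rw [show Complex.exp (((-x : ℝ) : ℂ) * Complex.I) * (Complex.exp (((-y : ℝ) : ℂ) * Complex.I) * (u:ℂ) * (v:ℂ))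
        = (Complex.exp (((-x : ℝ) : ℂ) * Complex.I) * Complex.exp (((-y : ℝ) : ℂ) * Complex.I)) * ((u:ℂ) * (v:ℂ)) from by ring,
      ← Complex.exp_add]
    congr 2
    push_cast; ring
  rw [this, show ((u:ℂ) * (v:ℂ)) = ((u * v : ℝ) : ℂ) from by push_cast; rfl,
    Complex.mul_re, Complex.exp_ofReal_mul_I_re, Complex.exp_ofReal_mul_I_im,
    Complex.ofReal_re, Complex.ofReal_im]
  simp only [Real.sin_neg, Real.cos_neg, Complex.ofReal_neg]
  ring_nf


lemma aux_nrm_lb {d : ℕ} (k : Fin d → ℤ) {A : ℝ} (hA : 0 ≤ A) (h : ∀ i, A ≤ (k i : ℝ)) :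
    Real.sqrt d * A ≤ Real.sqrt (∑ i, ((k i : ℝ)) ^ 2) := by
  have h1 : (d : ℝ) * A ^ 2 ≤ ∑ i, ((k i : ℝ)) ^ 2 := by
    calc (d:ℝ) * A ^ 2 = ∑ _i : Fin d, A ^ 2 := by
          simp [Finset.sum_const, nsmul_eq_mul]
      _ ≤ ∑ i, ((k i : ℝ)) ^ 2 :=
          Finset.sum_le_sum fun i _ => pow_le_pow_left₀ hA (h i) 2
  calc Real.sqrt d * A = Real.sqrt ((d:ℝ) * A ^ 2) := by
        rw [Real.sqrt_mul (by positivity), Real.sqrt_sq hA]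
    _ ≤ _ := Real.sqrt_le_sqrt h1

lemma aux_nrm_ub {d : ℕ} (k : Fin d → ℤ) {B : ℝ} (hB : 0 ≤ B) (h : ∀ i, |(k i : ℝ)| ≤ B) :
    Real.sqrt (∑ i, ((k i : ℝ)) ^ 2) ≤ Real.sqrt d * B := by
  have h1 : ∑ i, ((k i : ℝ)) ^ 2 ≤ (d : ℝ) * B ^ 2 := by
    calc ∑ i, ((k i : ℝ)) ^ 2 ≤ ∑ _i : Fin d, B ^ 2 :=
          Finset.sum_le_sum fun i _ => by
            rw [← sq_abs]; exact pow_le_pow_left₀ (abs_nonneg _) (h i) 2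
      _ = (d:ℝ) * B ^ 2 := by simp [Finset.sum_const, nsmul_eq_mul]
  calc Real.sqrt (∑ i, ((k i : ℝ)) ^ 2) ≤ Real.sqrt ((d:ℝ) * B ^ 2) := Real.sqrt_le_sqrt h1
    _ = Real.sqrt d * B := by rw [Real.sqrt_mul (by positivity), Real.sqrt_sq hB]

lemma aux_coord {d : ℕ} (k : Fin d → ℤ) {B : ℝ} (hB : 0 ≤ B)
    (h : Real.sqrt (∑ i, ((k i : ℝ)) ^ 2) ≤ B) (i : Fin d) : |(k i : ℝ)| ≤ B := by
  have hs : (0:ℝ) ≤ ∑ j, ((k j : ℝ)) ^ 2 := Finset.sum_nonneg fun j _ => sq_nonneg _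
  have h2 : ∑ j, ((k j : ℝ)) ^ 2 ≤ B ^ 2 := by
    have := Real.sq_sqrt hs
    nlinarith [Real.sqrt_nonneg (∑ j, ((k j : ℝ)) ^ 2)]
  have h3 : ((k i : ℝ)) ^ 2 ≤ B ^ 2 :=
    le_trans (Finset.single_le_sum (fun j _ => sq_nonneg ((k j : ℝ))) (Finset.mem_univ i)) h2
  calc |(k i : ℝ)| = Real.sqrt (((k i : ℝ)) ^ 2) := (Real.sqrt_sq_eq_abs _).symm
    _ ≤ Real.sqrt (B ^ 2) := Real.sqrt_le_sqrt h3
    _ = B := Real.sqrt_sq hB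

lemma aux_shell_norm (d : ℕ) (hd : 1 ≤ d) (σ N : ℝ) (hN : 100 * ((d : ℝ) + 1) ≤ N)
    (v : (Fin d → ℤ) → ℝ)
    (hv : ∀ k, (N ≤ Real.sqrt (∑ i, ((k i : ℝ)) ^ 2) ∧
        Real.sqrt (∑ i, ((k i : ℝ)) ^ 2) ≤ 2 * N) → v k = N ^ (-σ - (d : ℝ) / 2))
    (hv0 : ∀ k, ¬(N ≤ Real.sqrt (∑ i, ((k i : ℝ)) ^ 2) ∧
        Real.sqrt (∑ i, ((k i : ℝ)) ^ 2) ≤ 2 * N) → v k = 0) :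
    ((5:ℝ) ^ |σ| * (20 * Real.sqrt d) ^ d)⁻¹ ≤
      Real.sqrt (∑' k : Fin d → ℤ,
        (1 + (Real.sqrt (∑ i, ((k i : ℝ)) ^ 2)) ^ 2) ^ σ * ‖((v k : ℝ) : ℂ)‖ ^ 2) ∧
      Real.sqrt (∑' k : Fin d → ℤ,
        (1 + (Real.sqrt (∑ i, ((k i : ℝ)) ^ 2)) ^ 2) ^ σ * ‖((v k : ℝ) : ℂ)‖ ^ 2) ≤
      (5:ℝ) ^ |σ| * (20 * Real.sqrt d) ^ d := by
  classical
  set nrm : (Fin d → ℤ) → ℝ := fun k => Real.sqrt (∑ i, ((k i : ℝ)) ^ 2) with hnrmdef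
  set f : (Fin d → ℤ) → ℝ := fun k => (1 + nrm k ^ 2) ^ σ * ‖((v k : ℝ) : ℂ)‖ ^ 2 with hfdef
  have hd1 : (1:ℝ) ≤ d := by exact_mod_cast hd
  have hsd0 : 0 < Real.sqrt d := Real.sqrt_pos.2 (by linarith)
  have hsd1 : 1 ≤ Real.sqrt d := by
    rw [show (1:ℝ) = Real.sqrt 1 from Real.sqrt_one.symm]; exact Real.sqrt_le_sqrt hd1
  have hsdd : Real.sqrt d ≤ (d:ℝ) := by
    have h := Real.sqrt_le_sqrt (show (d:ℝ) ≤ (d:ℝ)^2 by nlinarith)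
    rwa [Real.sqrt_sq (by linarith)] at h
  have hN1 : (1:ℝ) ≤ N := by linarith
  have hN0 : (0:ℝ) < N := by linarith
  have hsdN : Real.sqrt d ≤ N / 100 := by linarith
  have h_sq : ∀ k, ‖((v k : ℝ) : ℂ)‖ ^ 2 = (v k) ^ 2 := fun k => by
    rw [Complex.norm_real, Real.norm_eq_abs, sq_abs]
  have hfval : ∀ k, f k = (1 + nrm k ^ 2) ^ σ * (v k) ^ 2 := fun k => by
    rw [hfdef]; dsimp only; rw [h_sq]
  have hfnonneg : ∀ k, 0 ≤ f k := fun k => by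
    rw [hfval]
    exact mul_nonneg (Real.rpow_nonneg (by positivity) _) (sq_nonneg _)
  set Bbig : Finset (Fin d → ℤ) :=
    Fintype.piFinset (fun _ => Finset.Icc (⌈-(2*N)⌉) (⌊2*N⌋)) with hBbig
  have hsupp : ∀ k ∉ Bbig, f k = 0 := by
    intro k hk
    have hns : ¬(N ≤ nrm k ∧ nrm k ≤ 2 * N) := by
      intro hsh
      apply hk
      rw [hBbig, Fintype.mem_piFinset]
      intro i
      have hco := aux_coord k (B := 2*N) (by linarith) hsh.2 i
      obtain ⟨hc1, hc2⟩ := abs_le.1 hco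
      rw [Finset.mem_Icc]
      constructor
      · rw [Int.ceil_le]; push_cast; linarith
      · rw [Int.le_floor]; push_cast; linarith
    rw [hfval, hv0 k hns]; ring
  have hsummable : Summable f := summable_of_ne_finset_zero hsupp
  have htsum : ∑' k, f k = ∑ k ∈ Bbig, f k := tsum_eq_sum hsupp
  have hw : ∀ k : Fin d → ℤ, (N ≤ nrm k ∧ nrm k ≤ 2 * N) →
      (5:ℝ) ^ (-|σ|) * ((N^2 : ℝ)) ^ σ ≤ (1 + nrm k ^ 2) ^ σ ∧
      (1 + nrm k ^ 2) ^ σ ≤ (5:ℝ) ^ |σ| * ((N^2 : ℝ)) ^ σ := by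
    intro k hsh
    have hnn : 0 ≤ nrm k := Real.sqrt_nonneg _
    exact aux_rpow (by norm_num) (by positivity) (by nlinarith [hsh.1]) (by nlinarith [hsh.2])
  have e1 : ((N^2:ℝ)) ^ σ * ((N ^ (-σ - (d:ℝ)/2)) ^ 2) = N ^ (-(d:ℝ)) := by
    rw [show ((N^2:ℝ)) ^ σ = N ^ (2*σ) by
        rw [← Real.rpow_natCast N 2, ← Real.rpow_mul hN0.le]; norm_num,
      sq, ← Real.rpow_add hN0, ← Real.rpow_add hN0]
    congr 1; ring
  have hNd : (N:ℝ)^(d:ℕ) * N ^ (-(d:ℝ)) = 1 := by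
    rw [← Real.rpow_natCast N d, ← Real.rpow_add hN0]; simp
  set P : ℝ := (5:ℝ) ^ |σ| * (20 * Real.sqrt d) ^ d with hP
  have h5a : (1:ℝ) ≤ (5:ℝ) ^ |σ| := Real.one_le_rpow (by norm_num) (abs_nonneg σ)
  have h5b : (0:ℝ) < (5:ℝ) ^ (-|σ|) := Real.rpow_pos_of_pos (by norm_num) _
  have h51 : (5:ℝ) ^ (-|σ|) * (5:ℝ) ^ |σ| = 1 := by
    rw [← Real.rpow_add (by norm_num)]; simp
  have h20 : (1:ℝ) ≤ (20 * Real.sqrt d) ^ d := by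
    calc (1:ℝ) = 1 ^ d := (one_pow d).symm
      _ ≤ (20 * Real.sqrt d) ^ d := pow_le_pow_left₀ zero_le_one (by linarith) d
  have hP1 : 1 ≤ P := by nlinarith
  have hPpos : 0 < P := by linarith
  constructor
  · -- lower bound
    set n : ℕ := ⌈N / Real.sqrt d⌉₊ with hn
    set r : ℕ := ⌊N / (2 * Real.sqrt d)⌋₊ with hr
    set B1 : Finset (Fin d → ℤ) :=
      Fintype.piFinset (fun _ => Finset.Icc (n:ℤ) ((n:ℤ) + r)) with hB1
    have hnlb : N / Real.sqrt d ≤ (n:ℝ) := Nat.le_ceil _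
    have hnub : (n:ℝ) ≤ N / Real.sqrt d + 1 := (Nat.ceil_lt_add_one (by positivity)).le
    have hrub : (r:ℝ) ≤ N / (2 * Real.sqrt d) := Nat.floor_le (by positivity)
    have hrlb : N / (2 * Real.sqrt d) ≤ (r:ℝ) + 1 := (Nat.lt_floor_add_one _).le
    have hB1shell : ∀ k ∈ B1, N ≤ nrm k ∧ nrm k ≤ 2 * N := by
      intro k hk
      rw [hB1, Fintype.mem_piFinset] at hk
      have hco : ∀ i, (n:ℝ) ≤ (k i : ℝ) ∧ (k i : ℝ) ≤ (n:ℝ) + r := by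
        intro i
        obtain ⟨hl, hr'⟩ := Finset.mem_Icc.1 (hk i)
        constructor
        · exact_mod_cast hl
        · exact_mod_cast hr'
      constructor
      · have h1 := aux_nrm_lb k (A := N / Real.sqrt d) (by positivity)
          (fun i => le_trans hnlb (hco i).1)
        calc N = Real.sqrt d * (N / Real.sqrt d) := by field_simp
          _ ≤ nrm k := h1
      · have h0n : (0:ℝ) ≤ (n:ℝ) := Nat.cast_nonneg n
        have h0r : (0:ℝ) ≤ (r:ℝ) := Nat.cast_nonneg r
        have h2 : nrm k ≤ Real.sqrt d * ((n:ℝ) + r) :=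
          aux_nrm_ub k (by positivity)
            (fun i => abs_le.2 ⟨by linarith [(hco i).1], (hco i).2⟩)
        have h3 : (n:ℝ) + r ≤ N / Real.sqrt d + 1 + N / (2 * Real.sqrt d) := by linarith
        have h4 : nrm k ≤ Real.sqrt d * (N / Real.sqrt d + 1 + N / (2 * Real.sqrt d)) :=
          le_trans h2 (mul_le_mul_of_nonneg_left h3 hsd0.le)
        have e : Real.sqrt d * (N / Real.sqrt d + 1 + N / (2 * Real.sqrt d))
            = N + Real.sqrt d + N / 2 := by field_simp
        rw [e] at h4; linarith
    have hcard1 : (Finset.Icc (n:ℤ) ((n:ℤ) + r)).card = r + 1 := by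
      rw [Int.card_Icc]; omega
    have hcardB1 : (B1.card : ℝ) = ((r:ℝ) + 1) ^ d := by
      rw [hB1, Fintype.card_piFinset]
      simp [hcard1]
    have hterm_lb : ∀ k ∈ B1,
        (5:ℝ) ^ (-|σ|) * ((N^2:ℝ)) ^ σ * (N ^ (-σ - (d:ℝ)/2)) ^ 2 ≤ f k := by
      intro k hk
      have hsh := hB1shell k hk
      rw [hfval, hv k hsh]
      exact mul_le_mul_of_nonneg_right (hw k hsh).1 (sq_nonneg _)
    have hsum_lb : (B1.card : ℝ) *
        ((5:ℝ) ^ (-|σ|) * ((N^2:ℝ)) ^ σ * (N ^ (-σ - (d:ℝ)/2)) ^ 2) ≤ ∑ k ∈ B1, f k := by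
      have := Finset.card_nsmul_le_sum B1 f _ hterm_lb
      simpa [nsmul_eq_mul] using this
    have hsum_tsum : ∑ k ∈ B1, f k ≤ ∑' k, f k :=
      Summable.sum_le_tsum B1 (fun k _ => hfnonneg k) hsummable
    have hq : (N / (2 * Real.sqrt d)) ^ d ≤ (B1.card : ℝ) := by
      rw [hcardB1]
      exact pow_le_pow_left₀ (by positivity) hrlb d
    have hcalc : (N / (2 * Real.sqrt d)) ^ d * ((5:ℝ) ^ (-|σ|) * ((N^2:ℝ)) ^ σ * (N ^ (-σ - (d:ℝ)/2)) ^ 2)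
        = (5:ℝ) ^ (-|σ|) * ((2 * Real.sqrt d) ^ d)⁻¹ := by
      rw [mul_assoc ((5:ℝ) ^ (-|σ|)), e1, div_pow, div_eq_mul_inv]
      calc N ^ d * ((2 * Real.sqrt d) ^ d)⁻¹ * ((5:ℝ) ^ (-|σ|) * N ^ (-(d:ℝ)))
          = (5:ℝ) ^ (-|σ|) * ((2 * Real.sqrt d) ^ d)⁻¹ * ((N:ℝ)^(d:ℕ) * N ^ (-(d:ℝ))) := by
            ring
        _ = (5:ℝ) ^ (-|σ|) * ((2 * Real.sqrt d) ^ d)⁻¹ := by rw [hNd, mul_one]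
    have hP2 : (5:ℝ) ^ |σ| * (2 * Real.sqrt d) ^ d ≤ P ^ 2 := by
      have h20' : (2 * Real.sqrt d) ^ d ≤ (20 * Real.sqrt d) ^ d :=
        pow_le_pow_left₀ (by positivity) (by linarith) d
      have hPP : (5:ℝ) ^ |σ| * (2 * Real.sqrt d) ^ d ≤ P := by
        rw [hP]; exact mul_le_mul_of_nonneg_left h20' (by linarith)
      exact hPP.trans (le_self_pow₀ hP1 two_ne_zero)
    have hPinv : (P⁻¹) ^ 2 ≤ (5:ℝ) ^ (-|σ|) * ((2 * Real.sqrt d) ^ d)⁻¹ := by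
      rw [inv_pow, Real.rpow_neg (by norm_num), ← mul_inv]
      exact inv_anti₀ (by positivity) hP2
    have hchain : (P⁻¹) ^ 2 ≤ ∑' k, f k := by
      calc (P⁻¹) ^ 2 ≤ (5:ℝ) ^ (-|σ|) * ((2 * Real.sqrt d) ^ d)⁻¹ := hPinv
        _ = (N / (2 * Real.sqrt d)) ^ d *
            ((5:ℝ) ^ (-|σ|) * ((N^2:ℝ)) ^ σ * (N ^ (-σ - (d:ℝ)/2)) ^ 2) := hcalc.symm
        _ ≤ (B1.card : ℝ) *
            ((5:ℝ) ^ (-|σ|) * ((N^2:ℝ)) ^ σ * (N ^ (-σ - (d:ℝ)/2)) ^ 2) := by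
            apply mul_le_mul_of_nonneg_right hq
            positivity
        _ ≤ ∑ k ∈ B1, f k := hsum_lb
        _ ≤ ∑' k, f k := hsum_tsum
    exact (Real.le_sqrt' (inv_pos.2 hPpos)).2 hchain
  · -- upper bound
    have hterm_ub : ∀ k ∈ Bbig,
        f k ≤ (5:ℝ) ^ |σ| * ((N^2:ℝ)) ^ σ * (N ^ (-σ - (d:ℝ)/2)) ^ 2 := by
      intro k _
      by_cases hsh : N ≤ nrm k ∧ nrm k ≤ 2 * N
      · rw [hfval, hv k hsh]
        exact mul_le_mul_of_nonneg_right (hw k hsh).2 (sq_nonneg _)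
      · rw [hfval, hv0 k hsh]
        have : (0:ℝ) ≤ (5:ℝ) ^ |σ| * ((N^2:ℝ)) ^ σ * (N ^ (-σ - (d:ℝ)/2)) ^ 2 := by positivity
        nlinarith
    have hsum_ub : ∑ k ∈ Bbig, f k ≤ (Bbig.card : ℝ) *
        ((5:ℝ) ^ |σ| * ((N^2:ℝ)) ^ σ * (N ^ (-σ - (d:ℝ)/2)) ^ 2) := by
      have := Finset.sum_le_card_nsmul Bbig f _ hterm_ub
      simpa [nsmul_eq_mul] using this
    have hcardIcc : ((Finset.Icc (⌈-(2*N)⌉) (⌊2*N⌋)).card : ℝ) ≤ 5 * N := by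
      rw [Int.card_Icc]
      have h1 : ((⌊2*N⌋ : ℝ)) ≤ 2*N := Int.floor_le _
      have h2 : -(2*N) ≤ ((⌈-(2*N)⌉ : ℝ)) := Int.le_ceil _
      have h3 : (0:ℤ) ≤ ⌊2*N⌋ + 1 - ⌈-(2*N)⌉ := by
        have ha : (0:ℤ) ≤ ⌊2*N⌋ := Int.floor_nonneg.2 (by linarith)
        have hb : ⌈-(2*N)⌉ ≤ (0:ℤ) := Int.ceil_le.2 (by push_cast; linarith)
        omega
      have h4 : (((⌊2*N⌋ + 1 - ⌈-(2*N)⌉).toNat : ℕ) : ℝ)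
          = ((⌊2*N⌋ : ℝ) + 1 - (⌈-(2*N)⌉ : ℝ)) := by
        rw [← Int.cast_natCast, Int.toNat_of_nonneg h3]; push_cast; ring
      rw [h4]; linarith
    have hcardBbig : (Bbig.card : ℝ) ≤ (5*N) ^ d := by
      have hcb : Bbig.card = (Finset.Icc (⌈-(2*N)⌉) (⌊2*N⌋)).card ^ d := by
        rw [hBbig, Fintype.card_piFinset]; simp
      rw [hcb]; push_cast
      exact pow_le_pow_left₀ (by positivity) hcardIcc d
    have hX : ((5*N) ^ d : ℝ) * ((5:ℝ) ^ |σ| * ((N^2:ℝ)) ^ σ * (N ^ (-σ - (d:ℝ)/2)) ^ 2)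
        = (5:ℝ) ^ |σ| * 5 ^ d := by
      calc ((5*N) ^ d : ℝ) * ((5:ℝ) ^ |σ| * ((N^2:ℝ)) ^ σ * (N ^ (-σ - (d:ℝ)/2)) ^ 2)
          = (5:ℝ) ^ |σ| * 5 ^ d *
            ((N:ℝ)^(d:ℕ) * (((N^2:ℝ)) ^ σ * (N ^ (-σ - (d:ℝ)/2)) ^ 2)) := by
            rw [mul_pow]; ring
        _ = (5:ℝ) ^ |σ| * 5 ^ d := by rw [e1, hNd, mul_one]
    have htsum_ub : ∑' k, f k ≤ (5:ℝ) ^ |σ| * 5 ^ d := by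
      rw [htsum]
      calc ∑ k ∈ Bbig, f k ≤ (Bbig.card : ℝ) *
            ((5:ℝ) ^ |σ| * ((N^2:ℝ)) ^ σ * (N ^ (-σ - (d:ℝ)/2)) ^ 2) := hsum_ub
        _ ≤ ((5*N) ^ d : ℝ) *
            ((5:ℝ) ^ |σ| * ((N^2:ℝ)) ^ σ * (N ^ (-σ - (d:ℝ)/2)) ^ 2) := by
            apply mul_le_mul_of_nonneg_right hcardBbig
            positivity
        _ = (5:ℝ) ^ |σ| * 5 ^ d := hX
    have h5d : ((5:ℝ)) ^ d ≤ (20 * Real.sqrt d) ^ d :=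
      pow_le_pow_left₀ (by norm_num) (by linarith) d
    calc Real.sqrt (∑' k, f k) ≤ Real.sqrt ((5:ℝ) ^ |σ| * 5 ^ d) :=
          Real.sqrt_le_sqrt htsum_ub
      _ ≤ Real.sqrt (P ^ 2) := by
          apply Real.sqrt_le_sqrt
          have hPge : (5:ℝ) ^ |σ| * 5 ^ d ≤ P := by
            rw [hP]; exact mul_le_mul_of_nonneg_left h5d (by linarith)
          nlinarith
      _ = P := Real.sqrt_sq hPpos.le


lemma aux_e2 (N s dR : ℝ) (hN0 : 0 < N) :
    ((N^2:ℝ))^s * (N ^ (-s - dR/2) * N ^ (-(s - 1/2) - dR/2))^2 = N ^ (1 - 2*s - 2*dR) := by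
  rw [show ((N^2:ℝ))^s = N ^ (2*s) by
      rw [← Real.rpow_natCast N 2, ← Real.rpow_mul hN0.le]; norm_num,
    ← Real.rpow_add hN0, sq, ← Real.rpow_add hN0, ← Real.rpow_add hN0]
  congr 1; ring

lemma aux_e3 (N s dR : ℝ) (hN0 : 0 < N) (j : ℕ) (hj : (j:ℝ) = 3*dR) :
    (N ^ (-s + (dR+1)/2))^2 = N ^ (1 - 2*s - 2*dR) * N^j := by
  rw [sq, ← Real.rpow_add hN0, ← Real.rpow_natCast N j, ← Real.rpow_add hN0, hj]
  congr 1; ring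

lemma aux_F (d : ℕ) (hd : 1 ≤ d) (s N : ℝ) (hN : 100 * ((d : ℝ) + 1) ≤ N)
    (a b : (Fin d → ℤ) → ℝ)
    (ha : ∀ k, (N ≤ Real.sqrt (∑ i, ((k i : ℝ)) ^ 2) ∧
        Real.sqrt (∑ i, ((k i : ℝ)) ^ 2) ≤ 2 * N) → a k = N ^ (-s - (d : ℝ) / 2))
    (ha0 : ∀ k, ¬(N ≤ Real.sqrt (∑ i, ((k i : ℝ)) ^ 2) ∧
        Real.sqrt (∑ i, ((k i : ℝ)) ^ 2) ≤ 2 * N) → a k = 0)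
    (hb : ∀ k, (N ≤ Real.sqrt (∑ i, ((k i : ℝ)) ^ 2) ∧
        Real.sqrt (∑ i, ((k i : ℝ)) ^ 2) ≤ 2 * N) → b k = N ^ (-(s - 1/2) - (d : ℝ) / 2))
    (hb0 : ∀ k, ¬(N ≤ Real.sqrt (∑ i, ((k i : ℝ)) ^ 2) ∧
        Real.sqrt (∑ i, ((k i : ℝ)) ^ 2) ≤ 2 * N) → b k = 0)
    (t : ℝ) (ht : 0 < t) (ht2 : t ≤ 1 / (100 * N ^ 2)) :
    (2 * (17:ℝ) ^ |s| * (4 * Real.sqrt d) ^ (3 * d))⁻¹ * t * N ^ (-s + ((d : ℝ) + 1) / 2) ≤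
      Real.sqrt (∑' k : Fin d → ℤ,
        (1 + (Real.sqrt (∑ i, ((k i : ℝ)) ^ 2)) ^ 2) ^ s *
        ‖∫ t' in (0:ℝ)..t,
            Complex.exp (-Complex.I *
              (((t - t') * (Real.sqrt (∑ i, ((k i : ℝ)) ^ 2)) ^ 2 : ℝ) : ℂ)) *
              ∑' k' : Fin d → ℤ,
                Complex.exp (-Complex.I *
                  ((t' * (Real.sqrt (∑ i, (((k - k') i : ℝ)) ^ 2)) ^ 2 : ℝ) : ℂ)) *
                  ((a (k - k') : ℝ) : ℂ) *
                  ((Real.cos (t' * Real.sqrt (∑ i, ((k' i : ℝ)) ^ 2)) * b k' : ℝ) : ℂ)‖ ^ 2) := by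
  classical
  set nrm : (Fin d → ℤ) → ℝ := fun k => Real.sqrt (∑ i, ((k i : ℝ)) ^ 2) with hnrmdef
  have hd1 : (1:ℝ) ≤ d := by exact_mod_cast hd
  have hsd0 : 0 < Real.sqrt d := Real.sqrt_pos.2 (by linarith)
  have hsd1 : 1 ≤ Real.sqrt d := by
    rw [show (1:ℝ) = Real.sqrt 1 from Real.sqrt_one.symm]; exact Real.sqrt_le_sqrt hd1
  have hsdd : Real.sqrt d ≤ (d:ℝ) := by
    have h := Real.sqrt_le_sqrt (show (d:ℝ) ≤ (d:ℝ)^2 by nlinarith)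
    rwa [Real.sqrt_sq (by linarith)] at h
  have hN1 : (1:ℝ) ≤ N := by linarith
  have hN0 : (0:ℝ) < N := by linarith
  have hsdN : Real.sqrt d ≤ N / 100 := by linarith
  have hnrm_nonneg : ∀ k, 0 ≤ nrm k := fun k => Real.sqrt_nonneg _
  have hnrm_sq : ∀ k : Fin d → ℤ, nrm k ^ 2 = ∑ i, ((k i : ℝ)) ^ 2 := fun k =>
    Real.sq_sqrt (Finset.sum_nonneg fun i _ => sq_nonneg _)
  have htN : t * N ^ 2 ≤ 1 / 100 := by
    have h : t * (100 * N ^ 2) ≤ 1 := by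
      rw [← le_div_iff₀ (by positivity)]; exact ht2
    nlinarith
  set Na : ℝ := N ^ (-s - (d:ℝ)/2) with hNa
  set Nb : ℝ := N ^ (-(s - 1/2) - (d:ℝ)/2) with hNb
  have hNa0 : 0 < Na := Real.rpow_pos_of_pos hN0 _
  have hNb0 : 0 < Nb := Real.rpow_pos_of_pos hN0 _
  -- index sets
  set n : ℕ := ⌈N / Real.sqrt d⌉₊ with hn
  set r : ℕ := ⌊N / (2 * Real.sqrt d)⌋₊ with hr
  set m : ℕ := r / 2 with hm
  have hnlb : N / Real.sqrt d ≤ (n:ℝ) := Nat.le_ceil _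
  have hnub : (n:ℝ) ≤ N / Real.sqrt d + 1 := (Nat.ceil_lt_add_one (by positivity)).le
  have hrub : (r:ℝ) ≤ N / (2 * Real.sqrt d) := Nat.floor_le (by positivity)
  have hrlb : N / (2 * Real.sqrt d) ≤ (r:ℝ) + 1 := (Nat.lt_floor_add_one _).le
  have hm2 : 2 * m ≤ r := by omega
  have hmr : m ≤ r := by omega
  have hmubR : (m:ℝ) ≤ N / (2 * Real.sqrt d) := le_trans (by exact_mod_cast Nat.cast_le.2 hmr) hrub
  have hm1 : N / (4 * Real.sqrt d) ≤ (m:ℝ) + 1 := by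
    have h1 : (r:ℝ) ≤ 2 * m + 1 := by exact_mod_cast Nat.cast_le.2 (by omega : r ≤ 2 * m + 1)
    have h2 : N / (4 * Real.sqrt d) = (N / (2 * Real.sqrt d)) / 2 := by
      rw [div_div]; congr 1; ring
    rw [h2]; linarith
  set B1 : Finset (Fin d → ℤ) :=
    Fintype.piFinset (fun _ => Finset.Icc (n:ℤ) ((n:ℤ) + r)) with hB1
  set K : Finset (Fin d → ℤ) :=
    Fintype.piFinset (fun _ => Finset.Icc (2*(n:ℤ) + r) (2*(n:ℤ) + r + m)) with hK
  set Bbig : Finset (Fin d → ℤ) :=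
    Fintype.piFinset (fun _ => Finset.Icc (⌈-(2*N)⌉) (⌊2*N⌋)) with hBbig
  set Bbig4 : Finset (Fin d → ℤ) :=
    Fintype.piFinset (fun _ => Finset.Icc (⌈-(4*N)⌉) (⌊4*N⌋)) with hBbig4
  set Tk : (Fin d → ℤ) → Finset (Fin d → ℤ) := fun k =>
    Fintype.piFinset (fun i => Finset.Icc (k i - n - r) (k i - n - r + m)) with hTk
  -- shell membership facts
  have hmem : ∀ k : Fin d → ℤ, (N ≤ nrm k ∧ nrm k ≤ 2 * N) → k ∈ Bbig := by
    intro k hsh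
    rw [hBbig, Fintype.mem_piFinset]
    intro i
    have hco := aux_coord k (B := 2*N) (by linarith) hsh.2 i
    obtain ⟨hc1, hc2⟩ := abs_le.1 hco
    rw [Finset.mem_Icc]
    exact ⟨by rw [Int.ceil_le]; push_cast; linarith, by rw [Int.le_floor]; push_cast; linarith⟩
  have hB1shell : ∀ k ∈ B1, N ≤ nrm k ∧ nrm k ≤ 2 * N := by
    intro k hk
    rw [hB1, Fintype.mem_piFinset] at hk
    have hco : ∀ i, (n:ℝ) ≤ (k i : ℝ) ∧ (k i : ℝ) ≤ (n:ℝ) + r := by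
      intro i
      obtain ⟨hl, hr'⟩ := Finset.mem_Icc.1 (hk i)
      exact ⟨by exact_mod_cast hl, by exact_mod_cast hr'⟩
    constructor
    · have h1 := aux_nrm_lb k (A := N / Real.sqrt d) (by positivity)
        (fun i => le_trans hnlb (hco i).1)
      calc N = Real.sqrt d * (N / Real.sqrt d) := by field_simp
        _ ≤ nrm k := h1
    · have h0n : (0:ℝ) ≤ (n:ℝ) := Nat.cast_nonneg n
      have h0r : (0:ℝ) ≤ (r:ℝ) := Nat.cast_nonneg r
      have h2 : nrm k ≤ Real.sqrt d * ((n:ℝ) + r) :=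
        aux_nrm_ub k (by positivity)
          (fun i => abs_le.2 ⟨by linarith [(hco i).1], (hco i).2⟩)
      have h3 : (n:ℝ) + r ≤ N / Real.sqrt d + 1 + N / (2 * Real.sqrt d) := by linarith
      have h4 : nrm k ≤ Real.sqrt d * (N / Real.sqrt d + 1 + N / (2 * Real.sqrt d)) :=
        le_trans h2 (mul_le_mul_of_nonneg_left h3 hsd0.le)
      have e : Real.sqrt d * (N / Real.sqrt d + 1 + N / (2 * Real.sqrt d))
          = N + Real.sqrt d + N / 2 := by field_simp
      rw [e] at h4; linarith
  have hKnrm : ∀ k ∈ K, 2 * N ≤ nrm k ∧ nrm k ≤ 4 * N := by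
    intro k hk
    rw [hK, Fintype.mem_piFinset] at hk
    have hco : ∀ i, 2*(n:ℝ) + r ≤ (k i : ℝ) ∧ (k i : ℝ) ≤ 2*(n:ℝ) + r + m := by
      intro i
      obtain ⟨hl, hr'⟩ := Finset.mem_Icc.1 (hk i)
      exact ⟨by exact_mod_cast hl, by exact_mod_cast hr'⟩
    have h0n : (0:ℝ) ≤ (n:ℝ) := Nat.cast_nonneg n
    have h0r : (0:ℝ) ≤ (r:ℝ) := Nat.cast_nonneg r
    have h0m : (0:ℝ) ≤ (m:ℝ) := Nat.cast_nonneg m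
    constructor
    · have h1 := aux_nrm_lb k (A := 2 * N / Real.sqrt d) (by positivity)
        (fun i => by
          have := (hco i).1
          have : 2 * N / Real.sqrt d ≤ 2*(n:ℝ) := by
            rw [div_le_iff₀ hsd0] at hnlb ⊢
            linarith
          linarith [(hco i).1])
      calc 2 * N = Real.sqrt d * (2 * N / Real.sqrt d) := by field_simp
        _ ≤ nrm k := h1
    · have h2 : nrm k ≤ Real.sqrt d * (2*(n:ℝ) + r + m) :=
        aux_nrm_ub k (by positivity)
          (fun i => abs_le.2 ⟨by linarith [(hco i).1], (hco i).2⟩)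
      have h3 : 2*(n:ℝ) + r + m ≤ 2 * (N / Real.sqrt d) + 2 + N / Real.sqrt d := by
        have : (r:ℝ) + m ≤ N / Real.sqrt d := by
          have e2 : N / (2 * Real.sqrt d) + N / (2 * Real.sqrt d) = N / Real.sqrt d := by
            field_simp; ring
          linarith [hrub, hmubR]
        linarith
      have h4 : nrm k ≤ Real.sqrt d * (2 * (N / Real.sqrt d) + 2 + N / Real.sqrt d) :=
        le_trans h2 (mul_le_mul_of_nonneg_left h3 hsd0.le)
      have e : Real.sqrt d * (2 * (N / Real.sqrt d) + 2 + N / Real.sqrt d)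
          = 3 * N + 2 * Real.sqrt d := by field_simp; ring
      rw [e] at h4; linarith
  have hTkmem : ∀ k ∈ K, ∀ k' ∈ Tk k, k' ∈ B1 ∧ (k - k') ∈ B1 := by
    intro k hk k' hk'
    rw [hK, Fintype.mem_piFinset] at hk
    rw [hTk] at hk'; rw [Fintype.mem_piFinset] at hk'
    constructor
    · rw [hB1, Fintype.mem_piFinset]
      intro i
      have h1 := Finset.mem_Icc.1 (hk i)
      have h2 := Finset.mem_Icc.1 (hk' i)
      rw [Finset.mem_Icc]
      omega
    · rw [hB1, Fintype.mem_piFinset]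
      intro i
      have h1 := Finset.mem_Icc.1 (hk i)
      have h2 := Finset.mem_Icc.1 (hk' i)
      rw [Finset.mem_Icc, Pi.sub_apply]
      omega
  -- cardinalities
  have hcardIccK : ∀ x : ℤ, (Finset.Icc x (x + m)).card = m + 1 := by
    intro x; rw [Int.card_Icc]; omega
  have hKcard : (K.card : ℝ) = ((m:ℝ) + 1) ^ d := by
    rw [hK, Fintype.card_piFinset]
    simp [hcardIccK]
  have hTkcard : ∀ k : Fin d → ℤ, ((Tk k).card : ℝ) = ((m:ℝ) + 1) ^ d := by
    intro k
    rw [hTk]; dsimp only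
    rw [Fintype.card_piFinset]
    simp [hcardIccK]
  -- inner tsum support
  have hinner_zero : ∀ (k k' : Fin d → ℤ) (t' : ℝ), k' ∉ Bbig →
      Complex.exp (-Complex.I * ((t' * nrm (k - k') ^ 2 : ℝ) : ℂ)) *
        ((a (k - k') : ℝ) : ℂ) * ((Real.cos (t' * nrm k') * b k' : ℝ) : ℂ) = 0 := by
    intro k k' t' hk'
    have hnb : b k' = 0 := hb0 k' (fun hsh => hk' (hmem k' hsh))
    rw [hnb]
    simp
  set G : (Fin d → ℤ) → ℝ → ℂ := fun k t' =>
    Complex.exp (-Complex.I * (((t - t') * nrm k ^ 2 : ℝ) : ℂ)) *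
      ∑ k' ∈ Bbig,
        Complex.exp (-Complex.I * ((t' * nrm (k - k') ^ 2 : ℝ) : ℂ)) *
          ((a (k - k') : ℝ) : ℂ) * ((Real.cos (t' * nrm k') * b k' : ℝ) : ℂ) with hG
  have hFeq : ∀ k : Fin d → ℤ,
      (∫ t' in (0:ℝ)..t, Complex.exp (-Complex.I * (((t - t') * nrm k ^ 2 : ℝ) : ℂ)) *
        ∑' k' : Fin d → ℤ, Complex.exp (-Complex.I * ((t' * nrm (k - k') ^ 2 : ℝ) : ℂ)) *
          ((a (k - k') : ℝ) : ℂ) * ((Real.cos (t' * nrm k') * b k' : ℝ) : ℂ))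
      = ∫ t' in (0:ℝ)..t, G k t' := by
    intro k
    apply intervalIntegral.integral_congr
    intro t' _
    rw [hG]
    dsimp only
    congr 1
    exact tsum_eq_sum (fun k' hk' => hinner_zero k k' t' hk')
  have hGcont : ∀ k, Continuous (G k) := by
    intro k
    rw [hG]
    apply Continuous.mul
    · apply Complex.continuous_exp.comp
      fun_prop
    · apply continuous_finset_sum
      intro k' _
      apply Continuous.mul
      · apply Continuous.mul
        · exact Complex.continuous_exp.comp (by fun_prop)
        · exact continuous_const
      · fun_prop
  have hGint : ∀ k, IntervalIntegrable (G k) MeasureTheory.volume 0 t :=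
    fun k => (hGcont k).intervalIntegrable 0 t
  have hGre : ∀ (k : Fin d → ℤ) (t' : ℝ), (G k t').re =
      ∑ k' ∈ Bbig, Real.cos ((t - t') * nrm k ^ 2 + t' * nrm (k - k') ^ 2) *
        (a (k - k') * (Real.cos (t' * nrm k') * b k')) := by
    intro k t'
    rw [hG]
    dsimp only
    rw [Finset.mul_sum, Complex.re_sum]
    refine Finset.sum_congr rfl (fun k' _ => ?_)
    exact aux_re_term ((t - t') * nrm k ^ 2) (t' * nrm (k - k') ^ 2)
      (a (k - k')) (Real.cos (t' * nrm k') * b k')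
  have hpi : (3:ℝ) < Real.pi := Real.pi_gt_three
  have hGlow : ∀ k ∈ K, ∀ t' ∈ Set.Icc (0:ℝ) t,
      ((m:ℝ)+1)^d * (Na * Nb / 2) ≤ (G k t').re := by
    intro k hk t' ht'
    obtain ⟨ht'0, ht't⟩ := ht'
    rw [hGre]
    have hθ1 : ∀ k' : Fin d → ℤ, (N ≤ nrm (k-k') ∧ nrm (k-k') ≤ 2*N) →
        0 ≤ (t - t') * nrm k ^ 2 + t' * nrm (k - k') ^ 2 ∧
        (t - t') * nrm k ^ 2 + t' * nrm (k - k') ^ 2 ≤ 1/5 := by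
      intro k' hsh
      have h1 := (hKnrm k hk).2
      have h2 : nrm k ^ 2 ≤ 16 * N^2 := by nlinarith [hnrm_nonneg k]
      have h3 : nrm (k - k') ^ 2 ≤ 16 * N^2 := by
        nlinarith [hnrm_nonneg (k - k'), hsh.2, hN0]
      constructor
      · have ha1 : 0 ≤ (t - t') * nrm k ^ 2 := mul_nonneg (by linarith) (sq_nonneg _)
        have ha2 : 0 ≤ t' * nrm (k - k') ^ 2 := mul_nonneg ht'0 (sq_nonneg _)
        linarith
      · nlinarith [htN, sq_nonneg (nrm k), sq_nonneg (nrm (k - k'))]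
    have hθ2 : ∀ k' : Fin d → ℤ, (N ≤ nrm k' ∧ nrm k' ≤ 2*N) →
        0 ≤ t' * nrm k' ∧ t' * nrm k' ≤ 1/50 := by
      intro k' hsh
      have htn : t * N ≤ 1/100 := by nlinarith
      constructor
      · exact mul_nonneg ht'0 (hnrm_nonneg k')
      · nlinarith [hsh.2, hnrm_nonneg k', hsh.1]
    have hterm_nonneg : ∀ k' ∈ Bbig,
        0 ≤ Real.cos ((t - t') * nrm k ^ 2 + t' * nrm (k - k') ^ 2) *
          (a (k - k') * (Real.cos (t' * nrm k') * b k')) := by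
      intro k' _
      by_cases hsa : N ≤ nrm (k - k') ∧ nrm (k - k') ≤ 2*N
      · by_cases hsb : N ≤ nrm k' ∧ nrm k' ≤ 2*N
        · have h1 := hθ1 k' hsa
          have h2 := hθ2 k' hsb
          have hc1 : 0 ≤ Real.cos ((t - t') * nrm k ^ 2 + t' * nrm (k - k') ^ 2) :=
            Real.cos_nonneg_of_mem_Icc ⟨by linarith [h1.1], by linarith [h1.2]⟩
          have hc2 : 0 ≤ Real.cos (t' * nrm k') :=
            Real.cos_nonneg_of_mem_Icc ⟨by linarith [h2.1], by linarith [h2.2]⟩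
          rw [ha _ hsa, hb _ hsb]
          exact mul_nonneg hc1 (mul_nonneg hNa0.le (mul_nonneg hc2 hNb0.le))
        · rw [hb0 _ hsb]; simp
      · rw [ha0 _ hsa]; simp
    have hsub : Tk k ⊆ Bbig := fun k' hk' => hmem k' (hB1shell k' (hTkmem k hk k' hk').1)
    have hterm_lb : ∀ k' ∈ Tk k,
        Na * Nb / 2 ≤ Real.cos ((t - t') * nrm k ^ 2 + t' * nrm (k - k') ^ 2) *
          (a (k - k') * (Real.cos (t' * nrm k') * b k')) := by
      intro k' hk'
      obtain ⟨hk'1, hk'2⟩ := hTkmem k hk k' hk'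
      have hsa := hB1shell _ hk'2
      have hsb := hB1shell _ hk'1
      have h1 := hθ1 k' hsa
      have h2 := hθ2 k' hsb
      have hc1 : 49/50 ≤ Real.cos ((t - t') * nrm k ^ 2 + t' * nrm (k - k') ^ 2) := by
        have hco := Real.one_sub_sq_div_two_le_cos
          (x := (t - t') * nrm k ^ 2 + t' * nrm (k - k') ^ 2)
        nlinarith [h1.1, h1.2]
      have hc2 : 9/10 ≤ Real.cos (t' * nrm k') := by
        have hco := Real.one_sub_sq_div_two_le_cos (x := t' * nrm k')
        nlinarith [h2.1, h2.2]
      rw [ha _ hsa, hb _ hsb]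
      have hstep : (49/50 : ℝ) * (Na * ((9/10) * Nb)) ≤
          Real.cos ((t - t') * nrm k ^ 2 + t' * nrm (k - k') ^ 2) *
            (Na * (Real.cos (t' * nrm k') * Nb)) := by
        apply mul_le_mul hc1 _ _ (le_trans (by norm_num) hc1)
        · exact mul_le_mul_of_nonneg_left (mul_le_mul_of_nonneg_right hc2 hNb0.le) hNa0.le
        · positivity
      have hp : 0 < Na * Nb := mul_pos hNa0 hNb0
      have he : (49/50 : ℝ) * (Na * ((9/10) * Nb)) = (441/500) * (Na * Nb) := by ring
      rw [he] at hstep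
      linarith
    calc ((m:ℝ)+1)^d * (Na * Nb / 2) = ((Tk k).card : ℝ) * (Na * Nb / 2) := by
          rw [hTkcard]
      _ ≤ ∑ k' ∈ Tk k, Real.cos ((t - t') * nrm k ^ 2 + t' * nrm (k - k') ^ 2) *
            (a (k - k') * (Real.cos (t' * nrm k') * b k')) := by
          have h := Finset.card_nsmul_le_sum (Tk k) _ _ hterm_lb
          rwa [nsmul_eq_mul] at h
      _ ≤ ∑ k' ∈ Bbig, Real.cos ((t - t') * nrm k ^ 2 + t' * nrm (k - k') ^ 2) *
            (a (k - k') * (Real.cos (t' * nrm k') * b k')) :=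
          Finset.sum_le_sum_of_subset_of_nonneg hsub
            (fun k' h1 _ => hterm_nonneg k' h1)
  have hFre : ∀ k ∈ K, t * (((m:ℝ)+1)^d * (Na * Nb / 2)) ≤
      (∫ t' in (0:ℝ)..t, G k t').re := by
    intro k hk
    have hint : ∫ t' in (0:ℝ)..t, (G k t').re = (∫ t' in (0:ℝ)..t, G k t').re :=
      Complex.reCLM.intervalIntegral_comp_comm (hGint k)
    rw [← hint]
    have hconst : ∫ _t' in (0:ℝ)..t, (((m:ℝ)+1)^d * (Na * Nb / 2))
        = t * (((m:ℝ)+1)^d * (Na * Nb / 2)) := by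
      rw [intervalIntegral.integral_const, sub_zero, smul_eq_mul]
    rw [← hconst]
    exact intervalIntegral.integral_mono_on ht.le intervalIntegrable_const
      ((Complex.continuous_re.comp (hGcont k)).intervalIntegrable 0 t) (hGlow k hk)
  have hE0 : 0 ≤ t * (((m:ℝ)+1)^d * (Na * Nb / 2)) := by positivity
  have hFnorm : ∀ k ∈ K, t * (((m:ℝ)+1)^d * (Na * Nb / 2)) ≤
      ‖∫ t' in (0:ℝ)..t, Complex.exp (-Complex.I * (((t - t') * nrm k ^ 2 : ℝ) : ℂ)) *
        ∑' k' : Fin d → ℤ, Complex.exp (-Complex.I * ((t' * nrm (k - k') ^ 2 : ℝ) : ℂ)) *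
          ((a (k - k') : ℝ) : ℂ) * ((Real.cos (t' * nrm k') * b k' : ℝ) : ℂ)‖ := by
    intro k hk
    rw [hFeq k]
    exact le_trans (hFre k hk) (Complex.re_le_norm _)
  set fF : (Fin d → ℤ) → ℝ := fun k => (1 + nrm k ^ 2) ^ s *
    ‖∫ t' in (0:ℝ)..t, Complex.exp (-Complex.I * (((t - t') * nrm k ^ 2 : ℝ) : ℂ)) *
      ∑' k' : Fin d → ℤ, Complex.exp (-Complex.I * ((t' * nrm (k - k') ^ 2 : ℝ) : ℂ)) *
        ((a (k - k') : ℝ) : ℂ) * ((Real.cos (t' * nrm k') * b k' : ℝ) : ℂ)‖ ^ 2 with hfF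
  have hfFnonneg : ∀ k, 0 ≤ fF k := fun k =>
    mul_nonneg (Real.rpow_nonneg (by positivity) _) (sq_nonneg _)
  have hFzero : ∀ k ∉ Bbig4, fF k = 0 := by
    intro k hk
    have hz : ∀ t' : ℝ,
        Complex.exp (-Complex.I * (((t - t') * nrm k ^ 2 : ℝ) : ℂ)) *
          ∑' k' : Fin d → ℤ, Complex.exp (-Complex.I * ((t' * nrm (k - k') ^ 2 : ℝ) : ℂ)) *
            ((a (k - k') : ℝ) : ℂ) * ((Real.cos (t' * nrm k') * b k' : ℝ) : ℂ) = 0 := by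
      intro t'
      have hall : ∀ k' : Fin d → ℤ,
          Complex.exp (-Complex.I * ((t' * nrm (k - k') ^ 2 : ℝ) : ℂ)) *
            ((a (k - k') : ℝ) : ℂ) * ((Real.cos (t' * nrm k') * b k' : ℝ) : ℂ) = 0 := by
        intro k'
        by_cases hsa : N ≤ nrm (k - k') ∧ nrm (k - k') ≤ 2*N
        · by_cases hsb : N ≤ nrm k' ∧ nrm k' ≤ 2*N
          · exfalso
            apply hk
            rw [hBbig4, Fintype.mem_piFinset]
            intro i
            have hca := aux_coord (k - k') (B := 2*N) (by linarith) hsa.2 i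
            have hcb := aux_coord k' (B := 2*N) (by linarith) hsb.2 i
            rw [Pi.sub_apply] at hca
            have habs : |(k i : ℝ)| ≤ 4*N := by
              have he : ((k i : ℤ) : ℝ) = ((k i - k' i : ℤ) : ℝ) + ((k' i : ℤ) : ℝ) := by
                push_cast; ring
              calc |(k i : ℝ)| = |((k i - k' i : ℤ) : ℝ) + ((k' i : ℤ) : ℝ)| := by rw [← he]
                _ ≤ |((k i - k' i : ℤ) : ℝ)| + |((k' i : ℤ) : ℝ)| := abs_add_le _ _
                _ ≤ 2*N + 2*N := add_le_add hca hcb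
                _ = 4*N := by ring
            obtain ⟨hc1, hc2⟩ := abs_le.1 habs
            rw [Finset.mem_Icc]
            exact ⟨by rw [Int.ceil_le]; push_cast; linarith,
              by rw [Int.le_floor]; push_cast; linarith⟩
          · rw [hb0 _ hsb]; simp
        · rw [ha0 _ hsa]; simp
      rw [(tsum_congr hall).trans tsum_zero, mul_zero]
    have hzint : (∫ t' in (0:ℝ)..t,
        Complex.exp (-Complex.I * (((t - t') * nrm k ^ 2 : ℝ) : ℂ)) *
          ∑' k' : Fin d → ℤ, Complex.exp (-Complex.I * ((t' * nrm (k - k') ^ 2 : ℝ) : ℂ)) *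
            ((a (k - k') : ℝ) : ℂ) * ((Real.cos (t' * nrm k') * b k' : ℝ) : ℂ)) = 0 := by
      calc _ = ∫ _t' in (0:ℝ)..t, (0:ℂ) := intervalIntegral.integral_congr (fun x _ => hz x)
        _ = 0 := intervalIntegral.integral_zero
    rw [hfF]
    dsimp only
    rw [hzint]
    simp
  have hsummF : Summable fF := summable_of_ne_finset_zero hFzero
  have hwK : ∀ k ∈ K, (17:ℝ)^(-|s|) * ((N^2:ℝ))^s ≤ (1 + nrm k ^ 2) ^ s := by
    intro k hk
    obtain ⟨h1, h2⟩ := hKnrm k hk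
    exact (aux_rpow (by norm_num) (by positivity)
      (by nlinarith only [hnrm_nonneg k, h1, hN0])
      (by nlinarith only [hnrm_nonneg k, h2, hN1])).1
  have hterm_final : ∀ k ∈ K,
      ((17:ℝ)^(-|s|) * ((N^2:ℝ))^s) * (t * (((m:ℝ)+1)^d * (Na * Nb / 2)))^2 ≤ fF k := by
    intro k hk
    have h1 := hwK k hk
    have h2 := hFnorm k hk
    have h3 := pow_le_pow_left₀ hE0 h2 2
    exact mul_le_mul h1 h3 (sq_nonneg _) (Real.rpow_nonneg (by positivity) _)
  have hsumK : ((m:ℝ)+1)^d *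
      (((17:ℝ)^(-|s|) * ((N^2:ℝ))^s) * (t * (((m:ℝ)+1)^d * (Na * Nb / 2)))^2)
      ≤ ∑ k ∈ K, fF k := by
    have h := Finset.card_nsmul_le_sum K fF _ hterm_final
    rw [nsmul_eq_mul, hKcard] at h
    exact h
  have htsumK : ∑ k ∈ K, fF k ≤ ∑' k, fF k :=
    Summable.sum_le_tsum K (fun k _ => hfFnonneg k) hsummF
  -- final arithmetic
  set c0 : ℝ := (2 * (17:ℝ) ^ |s| * (4 * Real.sqrt d) ^ (3 * d))⁻¹ with hc0
  set T : ℝ := (4 * Real.sqrt d) ^ (3 * d) with hT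
  have h171 : (1:ℝ) ≤ (17:ℝ)^|s| := Real.one_le_rpow (by norm_num) (abs_nonneg s)
  have h170 : (0:ℝ) < (17:ℝ)^|s| := by linarith only [h171]
  have hT1 : (1:ℝ) ≤ T := by
    rw [hT]
    calc (1:ℝ) = 1 ^ (3*d) := (one_pow _).symm
      _ ≤ (4 * Real.sqrt d) ^ (3*d) := pow_le_pow_left₀ zero_le_one (by linarith only [hsd1]) _
  have hT0 : (0:ℝ) < T := by linarith only [hT1]
  have hc00 : 0 < c0 := by
    rw [hc0]
    exact inv_pos.2 (mul_pos (mul_pos two_pos h170) hT0)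
  have h17inv : (17:ℝ)^(-|s|) = ((17:ℝ)^|s|)⁻¹ := by
    rw [Real.rpow_neg (by norm_num)]
  have hkey2 : c0^2 * T ≤ (17:ℝ)^(-|s|) / 4 := by
    rw [hc0, h17inv]
    have he : ((2 * (17:ℝ)^|s| * T)⁻¹)^2 * T = (4 * ((17:ℝ)^|s|)^2 * T)⁻¹ := by
      rw [inv_pow, show (2 * (17:ℝ)^|s| * T)^2 = (4 * ((17:ℝ)^|s|)^2 * T) * T by ring,
        mul_inv, mul_assoc, inv_mul_cancel₀ hT0.ne', mul_one]
    rw [he, show ((17:ℝ)^|s|)⁻¹ / 4 = (4 * (17:ℝ)^|s|)⁻¹ by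
      rw [mul_inv, div_eq_mul_inv]; ring]
    apply inv_anti₀ (by positivity)
    have hA2 : (17:ℝ)^|s| ≤ ((17:ℝ)^|s|)^2 := by nlinarith only [h171]
    have hA3 : ((17:ℝ)^|s|)^2 ≤ ((17:ℝ)^|s|)^2 * T :=
      le_mul_of_one_le_right (by positivity) hT1
    linarith only [hA2, hA3]
  set M : ℝ := ((m:ℝ)+1)^d with hM
  have hM1 : (0:ℝ) < M := by rw [hM]; positivity
  have hMlb : (N / (4 * Real.sqrt d))^d ≤ M := by
    rw [hM]; exact pow_le_pow_left₀ (by positivity) hm1 d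
  have hM3 : (N / (4 * Real.sqrt d))^(3*d) ≤ M^3 := by
    rw [show 3*d = d*3 by ring, pow_mul]
    exact pow_le_pow_left₀ (by positivity) hMlb 3
  have e4 : (N:ℝ)^(3*d) ≤ T * M^3 := by
    have he : (N:ℝ)^(3*d) = T * (N / (4 * Real.sqrt d))^(3*d) := by
      rw [hT, ← mul_pow]
      congr 1
      rw [mul_comm, div_mul_cancel₀ _ (show (4:ℝ) * Real.sqrt d ≠ 0 from by positivity)]
    rw [he]
    exact mul_le_mul_of_nonneg_left hM3 hT0.le
  have e2 : ((N^2:ℝ))^s * (Na * Nb)^2 = N ^ (1 - 2*s - 2*(d:ℝ)) := by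
    rw [hNa, hNb]; exact aux_e2 N s d hN0
  have e3 : (N ^ (-s + ((d:ℝ)+1)/2))^2 = N ^ (1 - 2*s - 2*(d:ℝ)) * (N:ℝ)^(3*d) :=
    aux_e3 N s d hN0 (3*d) (by push_cast; ring)
  clear_value c0 T M Na Nb
  have hX0 : (0:ℝ) < N ^ (1 - 2*s - 2*(d:ℝ)) := Real.rpow_pos_of_pos hN0 _
  have hKEY : (c0 * t * N ^ (-s + ((d:ℝ)+1)/2))^2 ≤ ∑' k, fF k := by
    calc (c0 * t * N ^ (-s + ((d:ℝ)+1)/2))^2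
        = c0^2 * t^2 * ((N ^ (-s + ((d:ℝ)+1)/2))^2) := by ring
      _ = c0^2 * t^2 * (N ^ (1 - 2*s - 2*(d:ℝ)) * (N:ℝ)^(3*d)) := by rw [e3]
      _ ≤ c0^2 * t^2 * (N ^ (1 - 2*s - 2*(d:ℝ)) * (T * M^3)) := by
          apply mul_le_mul_of_nonneg_left _ (mul_nonneg (sq_nonneg c0) (sq_nonneg t))
          exact mul_le_mul_of_nonneg_left e4 hX0.le
      _ = (c0^2 * T) * (t^2 * M^3 * N ^ (1 - 2*s - 2*(d:ℝ))) := by ring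
      _ ≤ ((17:ℝ)^(-|s|) / 4) * (t^2 * M^3 * N ^ (1 - 2*s - 2*(d:ℝ))) := by
          apply mul_le_mul_of_nonneg_right hkey2
            (mul_nonneg (mul_nonneg (sq_nonneg t) (pow_nonneg hM1.le 3)) hX0.le)
      _ = ((17:ℝ)^(-|s|) / 4) * (t^2 * M^3 * (((N^2:ℝ))^s * (Na * Nb)^2)) := by rw [e2]
      _ = M * (((17:ℝ)^(-|s|) * ((N^2:ℝ))^s) * (t * (M * (Na * Nb / 2)))^2) := by ring
      _ ≤ ∑ k ∈ K, fF k := hsumK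
      _ ≤ ∑' k, fF k := htsumK
  have hpos : 0 < c0 * t * N ^ (-s + ((d:ℝ)+1)/2) := by
    apply mul_pos (mul_pos hc00 ht) (Real.rpow_pos_of_pos hN0 _)
  exact (Real.le_sqrt' hpos).2 hKEY


/-- Counterexample to `C²`-smoothness of the Zakharov flow map below scaling: for
`s < (d−3)/2`, the data `f_N, g_N` with Fourier coefficients
`f̂_N(k) = N^{-s-d/2} 𝟙_{N ≤ |k| ≤ 2N}`, `ĝ_N(k) = N^{-(s-1/2)-d/2} 𝟙_{N ≤ |k| ≤ 2N}`
have `H^s`- resp. `H^{s-1/2}`-norms comparable to 1, while the second Picard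
iterate `∫₀^t e^{i(t−t')Δ}((e^{it'Δ}f_N)(cos(t'|∇|)g_N)) dt'` (written in Fourier
variables) has `H^s`-norm at least `c t N^{−s+(d+1)/2}` for `0 < t ≤ 1/(100N²)`. -/
theorem stmt_7 (d : ℕ) (hd : 1 ≤ d) (s : ℝ) (hs : s < ((d : ℝ) - 3) / 2) :
    ∃ C : ℝ, 1 ≤ C ∧ ∃ c : ℝ, 0 < c ∧ ∃ N₀ : ℝ, 1 ≤ N₀ ∧ ∀ N : ℝ, N₀ ≤ N →
      let nrm : (Fin d → ℤ) → ℝ := fun k => Real.sqrt (∑ i, ((k i : ℝ)) ^ 2)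
      let shell : (Fin d → ℤ) → Prop := fun k => N ≤ nrm k ∧ nrm k ≤ 2 * N
      let a : (Fin d → ℤ) → ℝ := fun k =>
        if shell k then N ^ (-s - (d : ℝ) / 2) else 0
      let b : (Fin d → ℤ) → ℝ := fun k =>
        if shell k then N ^ (-(s - 1/2) - (d : ℝ) / 2) else 0
      let Hnorm : ℝ → ((Fin d → ℤ) → ℂ) → ℝ := fun σ v =>
        Real.sqrt (∑' k : Fin d → ℤ, (1 + (nrm k) ^ 2) ^ σ * ‖v k‖ ^ 2)
      let F : ℝ → (Fin d → ℤ) → ℂ := fun t k =>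
        ∫ t' in (0:ℝ)..t,
          Complex.exp (-Complex.I * (((t - t') * (nrm k) ^ 2 : ℝ) : ℂ)) *
            ∑' k' : Fin d → ℤ,
              Complex.exp (-Complex.I * ((t' * (nrm (k - k')) ^ 2 : ℝ) : ℂ)) *
                ((a (k - k') : ℝ) : ℂ) *
                ((Real.cos (t' * nrm k') * b k' : ℝ) : ℂ)
      (C⁻¹ ≤ Hnorm s (fun k => ((a k : ℝ) : ℂ)) ∧
        Hnorm s (fun k => ((a k : ℝ) : ℂ)) ≤ C) ∧
      (C⁻¹ ≤ Hnorm (s - 1/2) (fun k => ((b k : ℝ) : ℂ)) ∧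
        Hnorm (s - 1/2) (fun k => ((b k : ℝ) : ℂ)) ≤ C) ∧
      ∀ t : ℝ, 0 < t → t ≤ 1 / (100 * N ^ 2) →
        c * t * N ^ (-s + ((d : ℝ) + 1) / 2) ≤ Hnorm s (F t) := by
  classical
  have hd1 : (1:ℝ) ≤ d := by exact_mod_cast hd
  have hsd0 : 0 < Real.sqrt d := Real.sqrt_pos.2 (by linarith)
  have hsd1 : 1 ≤ Real.sqrt d := by
    rw [show (1:ℝ) = Real.sqrt 1 from Real.sqrt_one.symm]; exact Real.sqrt_le_sqrt hd1
  have h20d : (1:ℝ) ≤ (20 * Real.sqrt d) ^ d := by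
    calc (1:ℝ) = 1 ^ d := (one_pow d).symm
      _ ≤ (20 * Real.sqrt d) ^ d := pow_le_pow_left₀ zero_le_one (by linarith) d
  have habs : (0:ℝ) ≤ |s| + |s - 1/2| := by positivity
  have h5C : (1:ℝ) ≤ (5:ℝ) ^ (|s| + |s - 1/2|) := Real.one_le_rpow (by norm_num) habs
  refine ⟨(5:ℝ) ^ (|s| + |s - 1/2|) * (20 * Real.sqrt d) ^ d, by nlinarith,
    (2 * (17:ℝ) ^ |s| * (4 * Real.sqrt d) ^ (3 * d))⁻¹,
    inv_pos.2 (mul_pos (mul_pos two_pos (Real.rpow_pos_of_pos (by norm_num) _))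
      (pow_pos (by linarith) _)),
    100 * ((d:ℝ) + 1), by linarith, ?_⟩
  intro N hN
  intro nrm shell a b Hnorm F
  have hCpos : (0:ℝ) < (5:ℝ) ^ (|s| + |s - 1/2|) * (20 * Real.sqrt d) ^ d := by
    apply mul_pos (Real.rpow_pos_of_pos (by norm_num) _) (by linarith)
  refine ⟨?_, ?_, ?_⟩
  · -- a bounds
    have h := aux_shell_norm d hd s N hN a (fun k hsh => if_pos hsh) (fun k hsh => if_neg hsh)
    have hP : (5:ℝ) ^ |s| * (20 * Real.sqrt d) ^ d ≤
        (5:ℝ) ^ (|s| + |s - 1/2|) * (20 * Real.sqrt d) ^ d := by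
      apply mul_le_mul_of_nonneg_right _ (by linarith)
      exact Real.rpow_le_rpow_of_exponent_le (by norm_num)
        (by linarith [abs_nonneg (s - 1/2)])
    have hPpos : (0:ℝ) < (5:ℝ) ^ |s| * (20 * Real.sqrt d) ^ d := by
      apply mul_pos (Real.rpow_pos_of_pos (by norm_num) _) (by linarith)
    constructor
    · exact le_trans (inv_anti₀ hPpos hP) h.1
    · exact le_trans h.2 hP
  · -- b bounds
    have h := aux_shell_norm d hd (s - 1/2) N hN b
      (fun k hsh => if_pos hsh) (fun k hsh => if_neg hsh)
    have hP : (5:ℝ) ^ |s - 1/2| * (20 * Real.sqrt d) ^ d ≤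
        (5:ℝ) ^ (|s| + |s - 1/2|) * (20 * Real.sqrt d) ^ d := by
      apply mul_le_mul_of_nonneg_right _ (by linarith)
      exact Real.rpow_le_rpow_of_exponent_le (by norm_num)
        (by linarith [abs_nonneg s])
    have hPpos : (0:ℝ) < (5:ℝ) ^ |s - 1/2| * (20 * Real.sqrt d) ^ d := by
      apply mul_pos (Real.rpow_pos_of_pos (by norm_num) _) (by linarith)
    constructor
    · exact le_trans (inv_anti₀ hPpos hP) h.1
    · exact le_trans h.2 hP
  · intro t ht ht2
    exact aux_F d hd s N hN a b
      (fun k hsh => if_pos hsh) (fun k hsh => if_neg hsh)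
      (fun k hsh => if_pos hsh) (fun k hsh => if_neg hsh) t ht ht2
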